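/- Let t, N be positive integers and let k ≥ 1 be an integer satisfying k(t+1−k) ≤ N < (k+1)(t−k). Then there exists an (N,k,t)-suitable core, and there does not exist an (N,k+1,t)-suitable core. (Equivalently, SCN(t,N) = k, where SCN(t,N) denotes the largest v for which an (N,v,t)-suitable core exists.) -/

import Mathlib

open Fin.NatCast


/-- An `(N,v,t)`-suitable core: an `N × v` array, each of whose rows is a
permutation of `{1,…,v}` (modelled as `Fin v`, with `C i p` the symbol in
position `p` of row `i`), such that for every `s` with `0 ≤ s ≤ t-1`, every
symbol precedes every subset of `s` other symbols in at least `t - s` rows. -/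
def IsSuitableCore (N v t : ℕ) (C : Fin N → Equiv.Perm (Fin v)) : Prop :=
  ∀ s : ℕ, s < t → ∀ σ : Fin v, ∀ S : Finset (Fin v), σ ∉ S → S.card = s →
    t - s ≤ (Finset.univ.filter
      (fun i : Fin N => ∀ τ ∈ S, ((C i).symm σ : ℕ) < ((C i).symm τ : ℕ))).card

/-- Row `i` of the construction: a rotation by `i / r` composed with a swap of
positions `1` and `1 + (i % r) % (k-1)`. -/
def rowPerm (k r : ℕ) [NeZero k] (i : ℕ) : Equiv.Perm (Fin k) :=
  (Equiv.swap 1 ((1 + (i % r) % (k - 1) : ℕ) : Fin k)).trans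
    (Equiv.addLeft ((i / r : ℕ) : Fin k))

lemma rowPerm_symm_apply (k r c j : ℕ) [NeZero k] (hj : j < r) (y : Fin k) :
    (rowPerm k r (r * c + j)).symm y
      = Equiv.swap 1 ((1 + j % (k - 1) : ℕ) : Fin k) (y - (c : Fin k)) := by
  have hr0 : 0 < r := by omega
  have h1 : (r * c + j) / r = c := by
    rw [Nat.mul_add_div hr0, Nat.div_eq_of_lt hj, Nat.add_zero]
  have h2 : (r * c + j) % r = j := by
    rw [Nat.mul_add_mod, Nat.mod_eq_of_lt hj]
  rw [rowPerm, h1, h2, Equiv.symm_trans_apply, Equiv.symm_swap, Equiv.addLeft_symm]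
  congr 1
  simp [neg_add_eq_sub]

lemma fin_one_ne_zero (k : ℕ) [NeZero k] (hk : 2 ≤ k) : (1 : Fin k) ≠ 0 := by
  intro h
  have := congrArg Fin.val h
  rw [Fin.val_one', Nat.mod_eq_of_lt (by omega : 1 < k)] at this
  simp at this

lemma fin_pos_of_ne_zero (k : ℕ) [NeZero k] (a : Fin k) (h : a ≠ 0) : 0 < (a : ℕ) := by
  rcases Nat.eq_zero_or_pos (a : ℕ) with h1 | h1
  · exact absurd (Fin.ext (by simp [h1]) : a = 0) h
  · exact h1

lemma fin_eq_one_of_val (k : ℕ) [NeZero k] (a : Fin k) (h : (a : ℕ) = 1) (hk : 2 ≤ k) :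
    a = 1 := by
  apply Fin.ext; rw [h, Fin.val_one', Nat.mod_eq_of_lt (by omega : 1 < k)]

lemma swap_zero (k : ℕ) [NeZero k] (hk : 2 ≤ k) (m : Fin k) (hm : m ≠ 0) :
    Equiv.swap (1 : Fin k) m 0 = 0 :=
  Equiv.swap_apply_of_ne_of_ne (Ne.symm (fin_one_ne_zero k hk)) (Ne.symm hm)

lemma swap_ne_zero (k : ℕ) [NeZero k] (hk : 2 ≤ k) (m : Fin k) (hm : m ≠ 0)
    (x : Fin k) (hx : x ≠ 0) : Equiv.swap (1 : Fin k) m x ≠ 0 := by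
  intro h
  exact hx ((Equiv.swap (1 : Fin k) m).injective (h.trans (swap_zero k hk m hm).symm))

lemma swap_ne_one (k : ℕ) [NeZero k] (m : Fin k)
    (x : Fin k) (hx : x ≠ m) : Equiv.swap (1 : Fin k) m x ≠ 1 := by
  intro h
  exact hx ((Equiv.swap (1 : Fin k) m).injective (h.trans (Equiv.swap_apply_right 1 m).symm))

/-- If `k(t+1-k) ≤ N < (k+1)(t-k)` then an `(N,k,t)`-suitable core exists but an
`(N,k+1,t)`-suitable core does not; i.e. `SCN(t,N) = k`. -/
theorem scn_eq_of_between
    (t N k : ℕ) (ht : 0 < t) (hN : 0 < N) (hk : 1 ≤ k)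
    (h₁ : (k : ℤ) * ((t : ℤ) + 1 - k) ≤ (N : ℤ))
    (h₂ : (N : ℤ) < ((k : ℤ) + 1) * ((t : ℤ) - k)) :
    (∃ C : Fin N → Equiv.Perm (Fin k), IsSuitableCore N k t C) ∧
      ¬ (∃ C : Fin N → Equiv.Perm (Fin (k + 1)), IsSuitableCore N (k + 1) t C) := by
  have hNz : (0 : ℤ) < N := by exact_mod_cast hN
  have htkz : (k : ℤ) < t := by nlinarith [Int.natCast_nonneg k]
  have htk : k < t := by exact_mod_cast htkz
  have ht2z : (2 * k : ℤ) < t := by nlinarith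
  have ht2 : 2 * k < t := by exact_mod_cast ht2z
  constructor
  · -- Existence of an (N, k, t)-suitable core
    haveI : NeZero k := ⟨by omega⟩
    set r : ℕ := t + 1 - k with hr
    have hr0 : 0 < r := by omega
    have hkrN : k * r ≤ N := by
      have h : ((k * r : ℕ) : ℤ) ≤ (N : ℤ) := by
        push_cast
        have hrz : (r : ℤ) = (t : ℤ) + 1 - k := by omega
        rw [hrz]; exact h₁
      exact_mod_cast h
    refine ⟨fun i => rowPerm k r i.val, ?_⟩
    intro s hs σ S hσS hcard
    have hce : (Finset.univ.erase σ).card = k - 1 := by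
      rw [Finset.card_erase_of_mem (Finset.mem_univ σ)]; simp
    rcases Nat.eq_zero_or_pos s with hs0 | hs1
    · -- s = 0 : every row is good
      subst hs0
      rw [Finset.card_eq_zero] at hcard
      subst hcard
      have htN : t ≤ N := by
        have h : (t : ℤ) ≤ N := by nlinarith
        exact_mod_cast h
      calc t - 0 ≤ N := by omega
        _ = (Finset.univ : Finset (Fin N)).card := by simp
        _ ≤ _ := Finset.card_le_card (fun i _ =>
            Finset.mem_filter.mpr ⟨Finset.mem_univ i, by simp⟩)
    · -- s ≥ 1
      have hSsub : S ⊆ Finset.univ.erase σ := fun τ hτ =>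
        Finset.mem_erase.mpr ⟨fun h => hσS (h ▸ hτ), Finset.mem_univ τ⟩
      have hsk : s ≤ k - 1 := by
        have h := Finset.card_le_card hSsub
        rw [hce, hcard] at h
        exact h
      have hk2 : 2 ≤ k := by omega
      have hrk : k + 2 ≤ r := by omega
      set U : Finset (Fin k) := (Finset.univ.erase σ) \ S with hU
      have hUcard : U.card = k - 1 - s := by
        rw [hU, Finset.card_sdiff_of_subset hSsub, hce, hcard]
      -- bounds for the two families of indices
      have hb1 : ∀ j : Fin r, r * σ.val + j.val < N := by
        intro j
        have h1 := σ.is_lt; have h2 := j.is_lt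
        calc r * σ.val + j.val < r * σ.val + r := by omega
          _ = r * (σ.val + 1) := by ring
          _ ≤ r * k := Nat.mul_le_mul_left r h1
          _ = k * r := by ring
          _ ≤ N := hkrN
      have hb2 : ∀ τ : Fin k, r * τ.val + ((σ - τ).val - 1) < N := by
        intro τ
        have h1 := τ.is_lt; have h2 := (σ - τ).is_lt
        calc r * τ.val + ((σ - τ).val - 1) < r * τ.val + r := by omega
          _ = r * (τ.val + 1) := by ring
          _ ≤ r * k := Nat.mul_le_mul_left r h1
          _ = k * r := by ring
          _ ≤ N := hkrN
      have hdiv : ∀ (c : Fin k) (j : ℕ), j < r → (r * c.val + j) / r = c.val := by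
        intro c j hj
        rw [Nat.mul_add_div hr0, Nat.div_eq_of_lt hj, Nat.add_zero]
      have hjlt : ∀ τ : Fin k, τ ≠ σ → (σ - τ).val - 1 < r := by
        intro τ _
        have := (σ - τ).is_lt
        omega
      -- the two families of good rows
      set G1 : Finset (Fin N) :=
        Finset.image (fun j : Fin r => (⟨r * σ.val + j.val, hb1 j⟩ : Fin N)) Finset.univ
        with hG1
      set G2 : Finset (Fin N) :=
        Finset.image (fun τ : Fin k => (⟨r * τ.val + ((σ - τ).val - 1), hb2 τ⟩ : Fin N)) U
        with hG2
      have hG1card : G1.card = r := by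
        rw [hG1, Finset.card_image_of_injective _ ?_, Finset.card_univ, Fintype.card_fin]
        intro j1 j2 h
        have hv := congrArg Fin.val h
        simp only [] at hv
        exact Fin.ext (Nat.add_left_cancel hv)
      have hG2card : G2.card = U.card := by
        rw [hG2]
        apply Finset.card_image_of_injOn
        intro τ1 hτ1 τ2 hτ2 h
        have hv := congrArg Fin.val h
        simp only [] at hv
        have hτ1σ : τ1 ≠ σ := (Finset.mem_erase.mp (Finset.mem_sdiff.mp hτ1).1).1
        have hτ2σ : τ2 ≠ σ := (Finset.mem_erase.mp (Finset.mem_sdiff.mp hτ2).1).1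
        have e1 := hdiv τ1 _ (hjlt τ1 hτ1σ)
        have e2 := hdiv τ2 _ (hjlt τ2 hτ2σ)
        have : τ1.val = τ2.val := by rw [← e1, ← e2, hv]
        exact Fin.ext this
      have hdisj : Disjoint G1 G2 := by
        rw [Finset.disjoint_left]
        intro x hx1 hx2
        rw [hG1, Finset.mem_image] at hx1
        rw [hG2, Finset.mem_image] at hx2
        obtain ⟨j, -, hj⟩ := hx1
        obtain ⟨τ, hτU, hτ⟩ := hx2
        have hτσ : τ ≠ σ := (Finset.mem_erase.mp (Finset.mem_sdiff.mp hτU).1).1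
        have hv : r * σ.val + j.val = r * τ.val + ((σ - τ).val - 1) := by
          have := congrArg Fin.val (hj.trans hτ.symm)
          simpa using this
        have e1 := hdiv σ j.val j.is_lt
        have e2 := hdiv τ _ (hjlt τ hτσ)
        have : σ.val = τ.val := by rw [← e1, ← e2, hv]
        exact hτσ (Fin.ext this.symm)
      have hcardG : (G1 ∪ G2).card = r + U.card := by
        rw [Finset.card_union_of_disjoint hdisj, hG1card, hG2card]
      -- each row in G1 ∪ G2 is good
      have hsub : G1 ∪ G2 ⊆ Finset.univ.filter
          (fun i : Fin N => ∀ τ ∈ S,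
            (((fun i : Fin N => rowPerm k r i.val) i).symm σ : ℕ)
              < (((fun i : Fin N => rowPerm k r i.val) i).symm τ : ℕ)) := by
        intro x hx
        rw [Finset.mem_union] at hx
        refine Finset.mem_filter.mpr ⟨Finset.mem_univ x, ?_⟩
        intro τ hτS
        have hτσ : τ ≠ σ := fun h => hσS (h ▸ hτS)
        rcases hx with hx | hx
        · -- rows where σ is first
          rw [hG1, Finset.mem_image] at hx
          obtain ⟨j, -, hj⟩ := hx
          subst hj
          simp only []
          rw [rowPerm_symm_apply k r σ.val j.val j.is_lt,
              rowPerm_symm_apply k r σ.val j.val j.is_lt]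
          set m : Fin k := ((1 + j.val % (k - 1) : ℕ) : Fin k) with hm
          have hmval : (m : ℕ) = 1 + j.val % (k - 1) := by
            rw [hm, Fin.val_natCast]
            have : j.val % (k - 1) < k - 1 := Nat.mod_lt _ (by omega)
            exact Nat.mod_eq_of_lt (by omega)
          have hmne : m ≠ 0 := by
            intro h
            have := congrArg Fin.val h
            rw [hmval] at this
            simp at this
          rw [Fin.cast_val_eq_self σ, sub_self, swap_zero k hk2 m hmne]
          have hne : τ - σ ≠ 0 := sub_ne_zero_of_ne hτσ
          have := swap_ne_zero k hk2 m hmne (τ - σ) hne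
          have := fin_pos_of_ne_zero k _ this
          simpa using this
        · -- rows where σ is second, first symbol not in S
          rw [hG2, Finset.mem_image] at hx
          obtain ⟨τ₀, hτ₀U, hτ₀⟩ := hx
          subst hτ₀
          have hτ₀σ : τ₀ ≠ σ := (Finset.mem_erase.mp (Finset.mem_sdiff.mp hτ₀U).1).1
          have hτ₀S : τ₀ ∉ S := (Finset.mem_sdiff.mp hτ₀U).2
          simp only []
          rw [rowPerm_symm_apply k r τ₀.val _ (hjlt τ₀ hτ₀σ),
              rowPerm_symm_apply k r τ₀.val _ (hjlt τ₀ hτ₀σ)]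
          have hστ₀ : σ - τ₀ ≠ 0 := sub_ne_zero_of_ne (Ne.symm hτ₀σ)
          have hv1 : 1 ≤ (σ - τ₀).val := fin_pos_of_ne_zero k _ hστ₀
          have hvk := (σ - τ₀).is_lt
          have hjmod : ((σ - τ₀).val - 1) % (k - 1) = (σ - τ₀).val - 1 :=
            Nat.mod_eq_of_lt (by omega)
          set m : Fin k := ((1 + ((σ - τ₀).val - 1) % (k - 1) : ℕ) : Fin k) with hm
          have hmval : (m : ℕ) = (σ - τ₀).val := by
            rw [hm, hjmod, Fin.val_natCast, Nat.mod_eq_of_lt (by omega)]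
            omega
          have hmeq : m = σ - τ₀ := Fin.ext hmval
          have hmne : m ≠ 0 := by rw [hmeq]; exact hστ₀
          rw [Fin.cast_val_eq_self τ₀]
          have hpos_σ : Equiv.swap (1 : Fin k) m (σ - τ₀) = 1 := by
            rw [← hmeq]; exact Equiv.swap_apply_right 1 m
          rw [hpos_σ]
          have hx0 : τ - τ₀ ≠ 0 := sub_ne_zero_of_ne (fun h => hτ₀S (h ▸ hτS))
          have hxm : τ - τ₀ ≠ m := by
            rw [hmeq]
            intro h
            exact hτσ (by
              have := congrArg (fun z => z + τ₀) h
              simpa [sub_add_cancel] using this)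
          have hne0 := swap_ne_zero k hk2 m hmne (τ - τ₀) hx0
          have hne1 := swap_ne_one k m (τ - τ₀) hxm
          have hval0 : 0 < (Equiv.swap (1 : Fin k) m (τ - τ₀) : ℕ) :=
            fin_pos_of_ne_zero k _ hne0
          have hval1 : (Equiv.swap (1 : Fin k) m (τ - τ₀) : ℕ) ≠ 1 := by
            intro h
            exact hne1 (fin_eq_one_of_val k _ h hk2)
          have hone : ((1 : Fin k) : ℕ) = 1 := by
            rw [Fin.val_one', Nat.mod_eq_of_lt (by omega : 1 < k)]
          rw [hone]
          omega
      calc t - s ≤ r + U.card := by omega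
        _ = (G1 ∪ G2).card := hcardG.symm
        _ ≤ _ := Finset.card_le_card hsub
  · -- Nonexistence of an (N, k+1, t)-suitable core
    rintro ⟨C, hC⟩
    have hfiber : ∀ σ : Fin (k + 1),
        (t - k) ≤ (Finset.univ.filter (fun i : Fin N => C i 0 = σ)).card := by
      intro σ
      have h := hC k htk σ (Finset.univ.erase σ) (Finset.notMem_erase σ _)
        (by rw [Finset.card_erase_of_mem (Finset.mem_univ σ)]; simp)
      refine le_trans h (Finset.card_le_card ?_)
      intro i hi
      rw [Finset.mem_filter] at hi ⊢
      refine ⟨hi.1, ?_⟩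
      by_contra hne
      have hmem : C i 0 ∈ Finset.univ.erase σ :=
        Finset.mem_erase.mpr ⟨hne, Finset.mem_univ _⟩
      have hlt := hi.2 (C i 0) hmem
      rw [Equiv.symm_apply_apply] at hlt
      simp at hlt
    have hsum : N = ∑ σ : Fin (k + 1),
        (Finset.univ.filter (fun i : Fin N => C i 0 = σ)).card := by
      have h := Finset.card_eq_sum_card_fiberwise
        (f := fun i : Fin N => C i 0) (s := Finset.univ) (t := Finset.univ)
        (fun x _ => Finset.mem_univ _)
      simpa using h
    have hge : (k + 1) * (t - k) ≤ N := by
      rw [hsum]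
      calc (k + 1) * (t - k) = ∑ _σ : Fin (k + 1), (t - k) := by
            simp [Finset.sum_const, mul_comm]
        _ ≤ _ := Finset.sum_le_sum (fun σ _ => hfiber σ)
    have hgez : ((k : ℤ) + 1) * ((t : ℤ) - k) ≤ N := by
      zify [htk.le] at hge
      convert hge using 2 <;> push_cast <;> ring
    linarith
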